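/- Let α, β, γ be the angles of a triangle v₁v₂v₃ at vertices v₂, v₁, v₃ respectively (so α + β + γ = π). If |v₁v₂| ≤ |v₂v₃|, D ≥ 1, η > 0, and there is a point v₀ with |v₁v₀| ≥ D⁻¹|v₁v₂| such that the ray from v₁ through v₀ makes angle β′ ≤ π − η with the segment v₁v₂ where β′ ≥ β and α + β′ < π, and the rays from v₁ through v₀ and from v₂ through v₃ meet at a point x with |v₁x| ≥ |v₁v₀|, then α ≥ D⁻¹ sin(η/2). -/

import Mathlib

open InnerProductGeometry EuclideanGeometry Real

variable {V : Type*} [NormedAddCommGroup V] [InnerProductSpace ℝ V]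

private lemma area_eq (x y : V) :
    Real.sin (InnerProductGeometry.angle x y) * (‖x‖ * ‖y‖) =
      Real.sin (InnerProductGeometry.angle x (x - y)) * (‖x‖ * ‖x - y‖) := by
  rw [sin_angle_mul_norm_mul_norm, sin_angle_mul_norm_mul_norm]
  congr 1
  simp only [inner_sub_left, inner_sub_right, real_inner_comm x y]
  ring

private lemma angle_right_sameRay (u : V) {x y : V} (h : SameRay ℝ x y) (hx : x ≠ 0)
    (hy : y ≠ 0) : InnerProductGeometry.angle u x = InnerProductGeometry.angle u y := by
  obtain ⟨r₁, r₂, hr₁, hr₂, hxy⟩ := h.exists_pos hx hy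
  rw [← InnerProductGeometry.angle_smul_right_of_pos u x hr₁, hxy,
    InnerProductGeometry.angle_smul_right_of_pos u y hr₂]

private lemma areaP (p1 p2 p3 : EuclideanSpace ℝ (Fin 2)) :
    Real.sin (∠ p2 p1 p3) * (dist p1 p2 * dist p1 p3) =
      Real.sin (∠ p1 p2 p3) * (dist p2 p1 * dist p2 p3) := by
  have h := area_eq (p2 - p1) (p3 - p1)
  have e1 : p1 - p2 = -(p2 - p1) := by abel
  have e2 : p3 - p2 = -((p2 - p1) - (p3 - p1)) := by abel
  simp only [EuclideanGeometry.angle, vsub_eq_sub, dist_eq_norm]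
  rw [e1, e2, InnerProductGeometry.angle_neg_neg, norm_neg, norm_sub_rev p1 p3,
    show p2 - p3 = p2 - p1 - (p3 - p1) from by abel]
  exact h

private lemma angle_sameRay_pt (a b : EuclideanSpace ℝ (Fin 2)) {p q : EuclideanSpace ℝ (Fin 2)}
    (h : SameRay ℝ (p - b) (q - b)) (hp : p ≠ b) (hq : q ≠ b) : ∠ a b p = ∠ a b q := by
  simp only [EuclideanGeometry.angle, vsub_eq_sub]
  exact angle_right_sameRay _ h (sub_ne_zero.2 hp) (sub_ne_zero.2 hq)

private lemma angle_le_of_dist_le {v₁ v₂ v₃ : EuclideanSpace ℝ (Fin 2)} (h12 : v₁ ≠ v₂)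
    (h13 : v₁ ≠ v₃) (hside : dist v₁ v₂ ≤ dist v₂ v₃) : ∠ v₂ v₃ v₁ ≤ ∠ v₂ v₁ v₃ := by
  have hc : 0 < dist v₁ v₂ := dist_pos.2 h12
  have hb : 0 < dist v₁ v₃ := dist_pos.2 h13
  have ha : 0 < dist v₂ v₃ := lt_of_lt_of_le hc hside
  have htri : dist v₁ v₃ ≤ dist v₁ v₂ + dist v₂ v₃ := dist_triangle _ _ _
  have e1 := EuclideanGeometry.law_cos v₂ v₁ v₃
  have e2 := EuclideanGeometry.law_cos v₂ v₃ v₁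
  simp only [dist_comm v₂ v₁, dist_comm v₃ v₁, dist_comm v₃ v₂] at e1 e2
  -- e1 : dist v₂ v₃ ^2 = d12^2 + d13^2 - 2*d12*d13*cos β
  -- e2 : dist v₂ v₁ ^2 = d23^2 + d13^2 - 2*d23*d13*cos γ  (dists comm'd)
  by_contra hlt
  push_neg at hlt
  have hcos : Real.cos (∠ v₂ v₃ v₁) < Real.cos (∠ v₂ v₁ v₃) :=
    Real.strictAntiOn_cos ⟨EuclideanGeometry.angle_nonneg _ _ _, EuclideanGeometry.angle_le_pi _ _ _⟩
      ⟨EuclideanGeometry.angle_nonneg _ _ _, EuclideanGeometry.angle_le_pi _ _ _⟩ hlt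
  have key : 0 ≤ (dist v₂ v₃ - dist v₁ v₂) *
      ((dist v₂ v₃ + dist v₁ v₂) ^ 2 - dist v₁ v₃ ^ 2) := by
    apply mul_nonneg (by linarith)
    nlinarith [hb.le]
  have h2abc : (0:ℝ) < 2 * (dist v₂ v₃ * dist v₁ v₂ * dist v₁ v₃) := by positivity
  have E1 : 2 * (dist v₂ v₃ * dist v₁ v₂ * dist v₁ v₃) * Real.cos (∠ v₂ v₁ v₃) =
      dist v₂ v₃ * (dist v₁ v₂ * dist v₁ v₂ + dist v₁ v₃ * dist v₁ v₃ - dist v₂ v₃ * dist v₂ v₃) := by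
    linear_combination (dist v₂ v₃) * e1
  have E2 : 2 * (dist v₂ v₃ * dist v₁ v₂ * dist v₁ v₃) * Real.cos (∠ v₂ v₃ v₁) =
      dist v₁ v₂ * (dist v₂ v₃ * dist v₂ v₃ + dist v₁ v₃ * dist v₁ v₃ - dist v₁ v₂ * dist v₁ v₂) := by
    linear_combination (dist v₁ v₂) * e2
  nlinarith [mul_lt_mul_of_pos_left hcos h2abc, key, E1, E2]

/-- Computational core of the "no acute angles" lemma, via the law of sines. -/
theorem stmt3 (v₀ v₁ v₂ v₃ x : EuclideanSpace ℝ (Fin 2))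
    (D η α β γ β' : ℝ) (hD : 1 ≤ D) (hη : 0 < η)
    (hα : α = EuclideanGeometry.angle v₁ v₂ v₃)
    (hβ : β = EuclideanGeometry.angle v₂ v₁ v₃)
    (hγ : γ = EuclideanGeometry.angle v₂ v₃ v₁)
    (hsum : α + β + γ = Real.pi)
    (hside : dist v₁ v₂ ≤ dist v₂ v₃)
    (hv0 : D⁻¹ * dist v₁ v₂ ≤ dist v₁ v₀)
    (hβ' : β' = EuclideanGeometry.angle v₀ v₁ v₂)
    (hβ'1 : β ≤ β') (hβ'2 : β' ≤ Real.pi - η) (hαβ' : α + β' < Real.pi)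
    (hx1 : SameRay ℝ (v₀ - v₁) (x - v₁))
    (hx2 : SameRay ℝ (v₃ - v₂) (x - v₂))
    (hxfar : dist v₁ v₀ ≤ dist v₁ x) :
    D⁻¹ * Real.sin (η / 2) ≤ α := by
  have hβ'0 : 0 ≤ β' := hβ' ▸ EuclideanGeometry.angle_nonneg _ _ _
  have hηπ : η ≤ π := by linarith
  have hsη : 0 ≤ Real.sin (η / 2) :=
    Real.sin_nonneg_of_nonneg_of_le_pi (by linarith) (by linarith [Real.pi_pos])
  have hsη1 : Real.sin (η / 2) ≤ 1 := Real.sin_le_one _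
  have hD0 : (0 : ℝ) < D⁻¹ := by positivity
  have hD1 : D⁻¹ ≤ 1 := by
    rw [inv_le_one_iff₀]; right; exact hD
  have hRHS1 : D⁻¹ * Real.sin (η / 2) ≤ 1 := by
    calc D⁻¹ * Real.sin (η / 2) ≤ 1 * 1 := mul_le_mul hD1 hsη1 hsη zero_le_one
      _ = 1 := mul_one 1
  have hπ2 : (1 : ℝ) < π / 2 := by linarith [Real.pi_gt_three]
  by_cases h12 : v₁ = v₂
  · have hα2 : α = π / 2 := by rw [hα, h12, EuclideanGeometry.angle_self_left]
    linarith
  by_cases h32 : v₃ = v₂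
  · have hα2 : α = π / 2 := by rw [hα, h32, EuclideanGeometry.angle_self_right]
    linarith
  have hd12 : 0 < dist v₁ v₂ := dist_pos.2 h12
  by_cases hβ0 : β = 0
  · -- degenerate: then γ = 0 and α = π
    have h13 : v₁ ≠ v₃ := by
      intro h
      rw [hβ, ← h, EuclideanGeometry.angle_self_right] at hβ0
      linarith [Real.pi_pos]
    have harea := areaP v₁ v₃ v₂
    rw [EuclideanGeometry.angle_comm v₃ v₁ v₂, ← hβ, EuclideanGeometry.angle_comm v₁ v₃ v₂,
      ← hγ, hβ0, Real.sin_zero, zero_mul] at harea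
    have hd13 : 0 < dist v₃ v₁ := by rw [dist_comm]; exact dist_pos.2 h13
    have hd32 : 0 < dist v₃ v₂ := by
      rw [dist_comm]; exact lt_of_lt_of_le hd12 hside
    have hsγ : Real.sin γ = 0 := by
      have := harea.symm
      rcases mul_eq_zero.1 this with h | h
      · exact h
      · exact absurd h (by positivity)
    have hγπ : γ ≠ π := by
      intro h
      have := EuclideanGeometry.dist_eq_add_dist_of_angle_eq_pi (hγ ▸ h)
      rw [dist_comm v₂ v₁] at this
      have h0 : dist v₁ v₃ = 0 := by linarith [dist_nonneg (x := v₁) (y := v₃)]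
      exact h13 (dist_eq_zero.1 h0)
    have hγ0 : γ = 0 := by
      have hγle : γ ≤ π := hγ ▸ EuclideanGeometry.angle_le_pi _ _ _
      have hγge : 0 ≤ γ := hγ ▸ EuclideanGeometry.angle_nonneg _ _ _
      have : γ < π := lt_of_le_of_ne hγle hγπ
      rcases Real.sin_eq_zero_iff_of_lt_of_lt (by linarith [Real.pi_pos]) this |>.1 hsγ with h
      exact h
    have : α = π := by linarith
    linarith
  -- main case
  have hβpos : 0 < β := lt_of_le_of_ne (hβ ▸ EuclideanGeometry.angle_nonneg _ _ _) (Ne.symm hβ0)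
  have hd10 : 0 < dist v₁ v₀ := lt_of_lt_of_le (by positivity) hv0
  have hd1x : 0 < dist v₁ x := lt_of_lt_of_le hd10 hxfar
  have h01 : v₀ ≠ v₁ := fun h => by simp [h] at hd10
  have hx1' : x ≠ v₁ := fun h => by simp [h] at hd1x
  have hx2' : x ≠ v₂ := by
    intro h
    have h1 : ∠ v₂ v₁ v₀ = ∠ v₂ v₁ x := angle_sameRay_pt v₂ v₁ hx1 h01 hx1'
    rw [h, EuclideanGeometry.angle_self_of_ne (Ne.symm h12)] at h1
    rw [hβ', EuclideanGeometry.angle_comm, h1] at hβ'1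
    linarith
  have hA : ∠ x v₁ v₂ = β' := by
    rw [hβ', EuclideanGeometry.angle_comm x v₁ v₂, EuclideanGeometry.angle_comm v₀ v₁ v₂]
    exact (angle_sameRay_pt v₂ v₁ hx1 h01 hx1').symm
  have hB : ∠ v₁ v₂ x = α := by
    rw [hα]
    exact (angle_sameRay_pt v₁ v₂ hx2 h32 hx2').symm
  have hsum2 := EuclideanGeometry.angle_add_angle_add_angle_eq_pi (p₁ := v₂) (p₂ := x)
    (p₃ := v₁) hx2'
  rw [hA, hB] at hsum2
  set δ := ∠ v₂ x v₁ with hδdef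
  have hδ : δ = π - α - β' := by linarith
  have hδ0 : 0 ≤ δ := EuclideanGeometry.angle_nonneg _ _ _
  have hδπ : δ ≤ π := EuclideanGeometry.angle_le_pi _ _ _
  have hsδ0 : 0 ≤ Real.sin δ := Real.sin_nonneg_of_nonneg_of_le_pi hδ0 hδπ
  -- law of sines in triangle v₁ v₂ x
  have hlos := areaP v₂ x v₁
  rw [EuclideanGeometry.angle_comm x v₂ v₁, hB, ← hδdef, dist_comm x v₂, dist_comm x v₁,
    dist_comm v₂ v₁] at hlos
  have hd2x : 0 < dist v₂ x := by rw [dist_comm]; exact dist_pos.2 hx2'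
  have hsin : Real.sin α * dist v₁ v₂ = Real.sin δ * dist v₁ x := by
    apply mul_left_cancel₀ hd2x.ne'
    linear_combination hlos
  have hα0 : 0 ≤ α := hα ▸ EuclideanGeometry.angle_nonneg _ _ _
  by_cases hcase : η / 2 ≤ α
  · calc D⁻¹ * Real.sin (η / 2) ≤ 1 * (η / 2) :=
        mul_le_mul hD1 (Real.sin_le (by linarith)) hsη zero_le_one
      _ ≤ α := by linarith
  push_neg at hcase
  have hγβ : γ ≤ β := by
    by_cases h13 : v₁ = v₃
    · rw [hβ, hγ, ← h13, EuclideanGeometry.angle_self_right]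
    · rw [hβ, hγ]
      exact angle_le_of_dist_le h12 h13 hside
  have hβge : (π - α) / 2 ≤ β := by linarith
  have hδle : δ ≤ π / 2 := by rw [hδ]; linarith
  have hδge : η / 2 ≤ δ := by rw [hδ]; linarith
  have hmono : Real.sin (η / 2) ≤ Real.sin δ := by
    apply Real.strictMonoOn_sin.monotoneOn ⟨by linarith [Real.pi_pos], by linarith⟩
      ⟨by linarith [Real.pi_pos], hδle⟩ hδge
  have h1 : Real.sin (η / 2) * (D⁻¹ * dist v₁ v₂) ≤ Real.sin δ * dist v₁ x :=
    mul_le_mul hmono (le_trans hv0 hxfar) (by positivity) hsδ0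
  rw [← hsin] at h1
  have h2 : D⁻¹ * Real.sin (η / 2) * dist v₁ v₂ ≤ Real.sin α * dist v₁ v₂ := by
    calc D⁻¹ * Real.sin (η / 2) * dist v₁ v₂ = Real.sin (η / 2) * (D⁻¹ * dist v₁ v₂) := by ring
      _ ≤ Real.sin α * dist v₁ v₂ := h1
  have h3 : D⁻¹ * Real.sin (η / 2) ≤ Real.sin α := le_of_mul_le_mul_right h2 hd12
  linarith [Real.sin_le hα0]
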